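/- arXiv:2503.08739 — 3 statements merged into one kernel-verified Lean document; each statement's English description precedes it below -/
import Mathlib

section
/- Let X be a countable set and let N be a natural number. Then there exists a function f : X → ℝ such that the map sending each finite multiset M over X with card M ≤ N to the sum ∑_{x ∈ M} f(x) (counted with multiplicity) is injective on the set of such multisets. Consequently, a sum-pooling readout over node features drawn from a countable universe, with graphs of at most N nodes, can be made injective. -/
private lemma sum_lt_pow (N : ℕ) (a : ℕ → ℕ) (ha : ∀ i, a i ≤ N) (n : ℕ) :
    (∑ i ∈ Finset.range n, a i * (N+1)^i) < (N+1)^n := by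
  induction n with
  | zero => simp
  | succ n ih =>
    rw [Finset.sum_range_succ, pow_succ]
    have h1 : a n * (N+1)^n ≤ N * (N+1)^n :=
      Nat.mul_le_mul_right _ (ha n)
    nlinarith [pow_pos (Nat.succ_pos N) n]

private lemma digits_unique (N : ℕ) (a b : ℕ → ℕ) (ha : ∀ i, a i ≤ N)
    (hb : ∀ i, b i ≤ N) (n : ℕ)
    (h : (∑ i ∈ Finset.range n, a i * (N+1)^i) = ∑ i ∈ Finset.range n, b i * (N+1)^i) :
    ∀ i < n, a i = b i := by
  induction n with
  | zero => intro i hi; omega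
  | succ n ih =>
    rw [Finset.sum_range_succ, Finset.sum_range_succ] at h
    have hla := sum_lt_pow N a ha n
    have hlb := sum_lt_pow N b hb n
    set P := (N+1)^n with hP
    have htop : a n = b n := by
      have h1 : (∑ i ∈ Finset.range n, a i * (N+1)^i + a n * P) / P = a n := by
        rw [Nat.add_mul_div_right _ _ (pow_pos (Nat.succ_pos N) n), Nat.div_eq_of_lt hla, Nat.zero_add]
      have h2 : (∑ i ∈ Finset.range n, b i * (N+1)^i + b n * P) / P = b n := by
        rw [Nat.add_mul_div_right _ _ (pow_pos (Nat.succ_pos N) n), Nat.div_eq_of_lt hlb, Nat.zero_add]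
      rw [← h1, ← h2, h]
    have hlow : (∑ i ∈ Finset.range n, a i * (N+1)^i) =
        ∑ i ∈ Finset.range n, b i * (N+1)^i := by
      rw [htop] at h; exact Nat.add_right_cancel h
    intro i hi
    rcases Nat.lt_succ_iff_lt_or_eq.mp hi with hi' | rfl
    · exact ih hlow i hi'
    · exact htop

private lemma finsupp_apply_le_sum (a : ℕ →₀ ℕ) (i : ℕ) :
    a i ≤ a.sum fun _ n => n := by
  by_cases h : i ∈ a.support
  · exact Finset.single_le_sum (fun j _ => Nat.zero_le (a j)) h
  · simp [Finsupp.notMem_support_iff.mp h]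

private lemma finsupp_digits_unique (N : ℕ) (a b : ℕ →₀ ℕ)
    (ha : ∀ i, a i ≤ N) (hb : ∀ i, b i ≤ N)
    (h : (a.sum fun i n => n * (N+1)^i) = b.sum fun i n => n * (N+1)^i) :
    a = b := by
  set n := (a.support ∪ b.support).sup id + 1 with hn
  have hsub : ∀ c : ℕ →₀ ℕ, c.support ⊆ a.support ∪ b.support →
      (c.sum fun i m => m * (N+1)^i) = ∑ i ∈ Finset.range n, c i * (N+1)^i := by
    intro c hc
    refine Finsupp.sum_of_support_subset c ?_ _ (by simp)
    intro i hi
    have := Finset.le_sup (f := id) (hc hi)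
    simp only [id] at this
    exact Finset.mem_range.mpr (by omega)
  rw [hsub a Finset.subset_union_left, hsub b Finset.subset_union_right] at h
  ext i
  by_cases hi : i ∈ a.support ∪ b.support
  · have := Finset.le_sup (f := id) hi
    simp only [id] at this
    exact digits_unique N a b ha hb n h i (by omega)
  · rw [Finset.mem_union] at hi
    push_neg at hi
    rw [Finsupp.notMem_support_iff.mp hi.1, Finsupp.notMem_support_iff.mp hi.2]

/-- Sum-pooling over multisets of features from a countable universe, with
multiset cardinality bounded by `N`, can be made injective: there exists a
feature encoding `f : X → ℝ` such that the map
`M ↦ ∑_x M(x) • f(x)` is injective on multisets of card at most `N`.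
Here a finite multiset over `X` is a finitely supported `M : X →₀ ℕ`,
with `card M = ∑_x M(x)`. -/
theorem sum_pooling_injective (X : Type*) [Countable X] (N : ℕ) :
    ∃ f : X → ℝ,
      Set.InjOn (fun M : X →₀ ℕ => M.sum fun x n => (n : ℝ) * f x)
        {M : X →₀ ℕ | (M.sum fun _ n => n) ≤ N} := by
  obtain ⟨e, he⟩ := Countable.exists_injective_nat X
  refine ⟨fun x => ((N+1 : ℕ) ^ (e x) : ℝ), ?_⟩
  intro M hM M' hM' hsum
  simp only [Set.mem_setOf_eq] at hM hM'
  -- cast the real-valued sums to ℕ-valued sums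
  have hcast : ∀ M : X →₀ ℕ,
      (M.sum fun x n => (n : ℝ) * ((N+1 : ℕ) ^ (e x) : ℝ)) =
      ((M.sum fun x n => n * (N+1)^(e x) : ℕ) : ℝ) := by
    intro M
    rw [Finsupp.sum, Finsupp.sum, Nat.cast_sum]
    push_cast
    rfl
  simp only [hcast] at hsum
  have hnat : (M.sum fun x n => n * (N+1)^(e x)) =
      M'.sum fun x n => n * (N+1)^(e x) := Nat.cast_injective hsum
  -- transfer to ℕ →₀ ℕ via mapDomain
  have hmap : ∀ M : X →₀ ℕ,
      ((Finsupp.mapDomain e M).sum fun i n => n * (N+1)^i) =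
      M.sum fun x n => n * (N+1)^(e x) :=
    fun M => Finsupp.sum_mapDomain_index (by simp) (by intro a m n; ring)
  have hcardmap : ∀ M : X →₀ ℕ,
      ((Finsupp.mapDomain e M).sum fun _ n => n) = M.sum fun _ n => n :=
    fun M => Finsupp.sum_mapDomain_index (by simp) (by simp)
  have hbnd : ∀ (M : X →₀ ℕ), (M.sum fun _ n => n) ≤ N →
      ∀ i, Finsupp.mapDomain e M i ≤ N := by
    intro M hMle i
    calc Finsupp.mapDomain e M i ≤ (Finsupp.mapDomain e M).sum fun _ n => n :=
          finsupp_apply_le_sum _ i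
      _ = M.sum fun _ n => n := hcardmap M
      _ ≤ N := hMle
  have key : Finsupp.mapDomain e M = Finsupp.mapDomain e M' := by
    apply finsupp_digits_unique N _ _ (hbnd M hM) (hbnd M' hM')
    rw [hmap, hmap, hnat]
  exact Finsupp.mapDomain_injective he key
end

section
/- Let X be a countable set and let N be a natural number. Then there exists a function f : X → ℝ taking rational values such that for every irrational real number ε, the map sending a pair (c, M) — where c ∈ X and M is a finite multiset over X with card M ≤ N — to (1 + ε)·f(c) + ∑_{x ∈ M} f(x) is injective on the set of such pairs. -/
/-- Digit sums base `b` are bounded. -/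
lemma digit_sum_lt (b : ℕ) (hb : 0 < b) (F : ℕ → ℕ) (h : ∀ n, F n < b) (K : ℕ) :
    (∑ n ∈ Finset.range K, F n * b ^ n) < b ^ K := by
  induction K with
  | zero => simp
  | succ K ih =>
    rw [Finset.sum_range_succ, pow_succ]
    have h1 : F K * b ^ K ≤ (b - 1) * b ^ K :=
      Nat.mul_le_mul_right _ (by have := h K; omega)
    have h2 : b ^ K + (b - 1) * b ^ K = b ^ K * b := by
      have h3 : 1 + (b - 1) = b := by omega
      calc b ^ K + (b - 1) * b ^ K = (1 + (b - 1)) * b ^ K := by ring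
        _ = b ^ K * b := by rw [h3]; ring
    calc (∑ n ∈ Finset.range K, F n * b ^ n) + F K * b ^ K
        < b ^ K + F K * b ^ K := Nat.add_lt_add_right ih _
      _ ≤ b ^ K + (b - 1) * b ^ K := Nat.add_le_add_left h1 _
      _ = b ^ K * b := h2

lemma digit_unique (b : ℕ) (hb : 0 < b) :
    ∀ K (F G : ℕ → ℕ), (∀ n, F n < b) → (∀ n, G n < b) →
      (∑ n ∈ Finset.range K, F n * b ^ n) = (∑ n ∈ Finset.range K, G n * b ^ n) →
      ∀ n < K, F n = G n := by
  intro K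
  induction K with
  | zero => intro F G hF hG h n hn; omega
  | succ K ih =>
    intro F G hF hG h n hn
    rw [Finset.sum_range_succ, Finset.sum_range_succ] at h
    have hA := digit_sum_lt b hb F hF K
    have hB := digit_sum_lt b hb G hG K
    have hpow : 0 < b ^ K := Nat.pow_pos hb
    have htop : F K = G K := by
      have h1 : (∑ n ∈ Finset.range K, F n * b ^ n + F K * b ^ K) / b ^ K = F K := by
        rw [Nat.add_mul_div_right _ _ hpow, Nat.div_eq_of_lt hA]; omega
      have h2 : (∑ n ∈ Finset.range K, G n * b ^ n + G K * b ^ K) / b ^ K = G K := by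
        rw [Nat.add_mul_div_right _ _ hpow, Nat.div_eq_of_lt hB]; omega
      rw [← h1, ← h2, h]
    have hrest : (∑ n ∈ Finset.range K, F n * b ^ n) = ∑ n ∈ Finset.range K, G n * b ^ n := by
      rw [htop] at h
      exact Nat.add_right_cancel h
    rcases Nat.lt_succ_iff_lt_or_eq.mp hn with h2x | h2x
    · exact ih F G hF hG hrest n h2x
    · rwa [h2x]

/-- GIN/HGIN update injectivity. -/
theorem gin_update_injective (X : Type*) [Countable X] (N : ℕ) :
    ∃ f : X → ℝ, (∀ x : X, ∃ q : ℚ, f x = (q : ℝ)) ∧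
      ∀ ε : ℝ, Irrational ε →
        Set.InjOn
          (fun p : X × (X →₀ ℕ) =>
            (1 + ε) * f p.1 + p.2.sum fun x n => (n : ℝ) * f x)
          {p : X × (X →₀ ℕ) | (p.2.sum fun _ n => n) ≤ N} := by
  obtain ⟨e, he⟩ := Countable.exists_injective_nat X
  set b : ℕ := N + 2 with hb
  refine ⟨fun x => ((b ^ e x : ℕ) : ℝ), fun x => ⟨((b ^ e x : ℕ) : ℚ), by push_cast; ring⟩, ?_⟩
  intro ε hε p hp p2 hp2 heq
  simp only [Set.mem_setOf_eq] at hp hp2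
  obtain ⟨c, M⟩ := p
  obtain ⟨c2, M2⟩ := p2
  simp only at heq hp hp2 ⊢
  -- natural-number sums
  set s : ℕ := M.sum (fun x n => n * b ^ e x) with hs
  set s2 : ℕ := M2.sum (fun x n => n * b ^ e x) with hs2
  have hcast : (M.sum fun x n => (n : ℝ) * ((b ^ e x : ℕ) : ℝ)) = (s : ℝ) := by
    rw [hs, Finsupp.sum, Finsupp.sum, Nat.cast_sum]
    push_cast; ring_nf; exact Finset.sum_congr rfl (fun _ _ => mul_comm _ _)
  have hcast2 : (M2.sum fun x n => (n : ℝ) * ((b ^ e x : ℕ) : ℝ)) = (s2 : ℝ) := by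
    rw [hs2, Finsupp.sum, Finsupp.sum, Nat.cast_sum]
    push_cast; ring_nf; exact Finset.sum_congr rfl (fun _ _ => mul_comm _ _)
  rw [hcast, hcast2] at heq
  -- step 1: c = c2
  have hc : c = c2 := by
    by_contra hcc
    have hee : e c ≠ e c2 := fun h => hcc (he h)
    have hneN : b ^ e c ≠ b ^ e c2 :=
      fun h => hee (Nat.pow_right_injective (by omega) h)
    have hne : ((b ^ e c : ℕ) : ℝ) ≠ ((b ^ e c2 : ℕ) : ℝ) := by exact_mod_cast hneN
    set q : ℚ := (((b ^ e c2 : ℕ) : ℚ) + (s2 : ℚ) - ((b ^ e c : ℕ) : ℚ) - (s : ℚ)) /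
        (((b ^ e c : ℕ) : ℚ) - ((b ^ e c2 : ℕ) : ℚ)) with hq
    have hεq : ε = (q : ℝ) := by
      rw [hq]
      push_cast at hne heq ⊢
      rw [eq_div_iff (sub_ne_zero.mpr hne)]
      ring_nf
      ring_nf at heq
      linarith
    exact Rat.not_irrational q (hεq ▸ hε)
  subst hc
  have hss : s = s2 := by
    have : (s : ℝ) = (s2 : ℝ) := by linarith [heq]
    exact_mod_cast this
  -- step 2: M = M2
  refine Prod.ext rfl ?_
  simp only
  -- move to ℕ →₀ ℕ via mapDomain
  have key : M.mapDomain e = M2.mapDomain e := by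
    set F := M.mapDomain e with hF
    set G := M2.mapDomain e with hG
    have hFsum : F.sum (fun n a => a * b ^ n) = s := by
      rw [hF, Finsupp.sum_mapDomain_index (by simp) (by intros; ring)]
    have hGsum : G.sum (fun n a => a * b ^ n) = s2 := by
      rw [hG, Finsupp.sum_mapDomain_index (by simp) (by intros; ring)]
    have hFlt : ∀ n, F n < b := by
      intro n
      have h1 : F n ≤ F.sum fun _ a => a := by
        by_cases hn : n ∈ F.support
        · exact Finset.single_le_sum (fun _ _ => Nat.zero_le _) hn
        · simp [Finsupp.notMem_support_iff.mp hn]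
      have h2 : F.sum (fun _ a => a) = M.sum fun _ a => a := by
        rw [hF, Finsupp.sum_mapDomain_index (by simp) (by intros; rfl)]
      omega
    have hGlt : ∀ n, G n < b := by
      intro n
      have h1 : G n ≤ G.sum fun _ a => a := by
        by_cases hn : n ∈ G.support
        · exact Finset.single_le_sum (fun _ _ => Nat.zero_le _) hn
        · simp [Finsupp.notMem_support_iff.mp hn]
      have h2 : G.sum (fun _ a => a) = M2.sum fun _ a => a := by
        rw [hG, Finsupp.sum_mapDomain_index (by simp) (by intros; rfl)]
      omega
    -- choose K beyond supports
    obtain ⟨K, hK⟩ : ∃ K, (∀ n ∈ F.support, n < K) ∧ ∀ n ∈ G.support, n < K := by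
      refine ⟨(F.support ∪ G.support).sup id + 1, ?_, ?_⟩ <;>
        intro n hn <;>
        exact Nat.lt_succ_of_le (Finset.le_sup (f := id) (by simp [hn]))
    have hFK : F.sum (fun n a => a * b ^ n) = ∑ n ∈ Finset.range K, F n * b ^ n := by
      apply Finsupp.sum_of_support_subset
      · intro n hn; exact Finset.mem_range.mpr (hK.1 n hn)
      · intros; simp
    have hGK : G.sum (fun n a => a * b ^ n) = ∑ n ∈ Finset.range K, G n * b ^ n := by
      apply Finsupp.sum_of_support_subset
      · intro n hn; exact Finset.mem_range.mpr (hK.2 n hn)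
      · intros; simp
    have hsum : (∑ n ∈ Finset.range K, F n * b ^ n) = ∑ n ∈ Finset.range K, G n * b ^ n := by
      rw [← hFK, ← hGK, hFsum, hGsum, hss]
    ext n
    by_cases hn : n < K
    · exact digit_unique b (by omega) K F G hFlt hGlt hsum n hn
    · have h1 : F n = 0 := Finsupp.notMem_support_iff.mp (fun h => hn (hK.1 n h))
      have h2 : G n = 0 := Finsupp.notMem_support_iff.mp (fun h => hn (hK.2 n h))
      rw [h1, h2]
  exact Finsupp.mapDomain_injective he key
end

section
/- Let X be a countable set, let R be a finite nonempty set (of relation types), and let N be a natural number. Then there exist rational-valued functions f : X → ℝ and f_r : X → ℝ for each r ∈ R, with the following property: for every irrational real number ε, the map sending a tuple (c, (M_r)_{r ∈ R}) — where c ∈ X and each M_r is a finite multiset over X with card M_r ≤ N — to (1 + ε)·f(c) + ∑_{r ∈ R} ∑_{x ∈ M_r} f_r(x) is injective on the set of such tuples. In particular, a relation-type-aware aggregation can simultaneously recover the center feature c and, for every relation type r, the exact multiset M_r of neighbor features linked by relation r. -/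
private lemma hgin_digit_bound (N : ℕ) :
    ∀ (K : ℕ) (a : ℕ → ℕ), (∀ j, a j ≤ N) →
      ∑ j ∈ Finset.range K, (a j : ℝ) * (((N : ℝ) + 2)⁻¹) ^ (j + 1) < 1 := by
  set w : ℝ := ((N : ℝ) + 2)⁻¹ with hwdef
  have hNpos : (0:ℝ) < (N : ℝ) + 2 := by positivity
  have hw : (0:ℝ) < w := by positivity
  have hw1 : ((N:ℝ) + 1) * w < 1 := by
    rw [hwdef, mul_inv_lt_iff₀ hNpos]
    linarith
  intro K
  induction K with
  | zero => intro a ha; simp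
  | succ K ih =>
    intro a ha
    have expand : ∑ j ∈ Finset.range (K+1), (a j : ℝ) * w ^ (j + 1)
        = ((a 0 : ℝ) + ∑ j ∈ Finset.range K, (a (j+1) : ℝ) * w ^ (j + 1)) * w := by
      rw [Finset.sum_range_succ', add_mul, Finset.sum_mul, add_comm]
      congr 1
      · ring
      · exact Finset.sum_congr rfl fun j _ => by ring
    rw [expand]
    have hT := ih (fun j => a (j+1)) (fun j => ha (j+1))
    have ha0 : (a 0 : ℝ) ≤ (N : ℝ) := by exact_mod_cast ha 0
    nlinarith [hw, hT, ha0, hw1]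

private lemma hgin_digits_inj (N : ℕ) :
    ∀ (K : ℕ) (a b : ℕ → ℕ), (∀ j, a j ≤ N) → (∀ j, b j ≤ N) →
      (∑ j ∈ Finset.range K, (a j : ℝ) * (((N : ℝ) + 2)⁻¹) ^ (j + 1)
        = ∑ j ∈ Finset.range K, (b j : ℝ) * (((N : ℝ) + 2)⁻¹) ^ (j + 1)) →
      ∀ j < K, a j = b j := by
  set w : ℝ := ((N : ℝ) + 2)⁻¹ with hwdef
  have hw : (0:ℝ) < w := by positivity
  intro K
  induction K with
  | zero => intro a b _ _ _ j hj; omega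
  | succ K ih =>
    intro a b ha hb heq j hj
    have expand : ∀ c : ℕ → ℕ, ∑ i ∈ Finset.range (K+1), (c i : ℝ) * w ^ (i + 1)
        = ((c 0 : ℝ) + ∑ i ∈ Finset.range K, (c (i+1) : ℝ) * w ^ (i + 1)) * w := by
      intro c
      rw [Finset.sum_range_succ', add_mul, Finset.sum_mul, add_comm]
      congr 1
      · ring
      · exact Finset.sum_congr rfl fun i _ => by ring
    rw [expand a, expand b] at heq
    have heq' : (a 0 : ℝ) + ∑ i ∈ Finset.range K, (a (i+1) : ℝ) * w ^ (i + 1)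
        = (b 0 : ℝ) + ∑ i ∈ Finset.range K, (b (i+1) : ℝ) * w ^ (i + 1) :=
      mul_right_cancel₀ hw.ne' heq
    have hTa := hgin_digit_bound N K (fun i => a (i+1)) (fun i => ha (i+1))
    have hTb := hgin_digit_bound N K (fun i => b (i+1)) (fun i => hb (i+1))
    have hTa0 : (0:ℝ) ≤ ∑ i ∈ Finset.range K, (a (i+1) : ℝ) * w ^ (i + 1) :=
      Finset.sum_nonneg fun i _ => by positivity
    have hTb0 : (0:ℝ) ≤ ∑ i ∈ Finset.range K, (b (i+1) : ℝ) * w ^ (i + 1) :=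
      Finset.sum_nonneg fun i _ => by positivity
    have h0 : a 0 = b 0 := by
      rcases lt_trichotomy (a 0) (b 0) with h | h | h
      · exfalso
        have : (a 0 : ℝ) + 1 ≤ (b 0 : ℝ) := by exact_mod_cast Nat.succ_le_of_lt h
        linarith
      · exact h
      · exfalso
        have : (b 0 : ℝ) + 1 ≤ (a 0 : ℝ) := by exact_mod_cast Nat.succ_le_of_lt h
        linarith
    have hrest := ih (fun i => a (i+1)) (fun i => b (i+1)) (fun i => ha (i+1))
      (fun i => hb (i+1)) (by rw [h0] at heq'; push_cast at heq' ⊢; linarith)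
    match j with
    | 0 => exact h0
    | j + 1 => exact hrest j (by omega)


/-- Core of HGIN's expressive-power theorem: over a countable feature universe
`X`, a finite nonempty set `R` of relation types, and bound `N`, there exist
rational-valued encodings `f : X → ℝ` and `frel : R → X → ℝ` such that for
every irrational `ε`, the typed aggregation
`(c, (M_r)_r) ↦ (1 + ε) * f c + ∑_{r ∈ R} ∑_x (M_r x) • frel r x`
is injective on tuples of a center feature `c` and per-relation-type finite
multisets `M_r` over `X` each of card at most `N`. -/
theorem hgin_typed_aggregation_injective
    (X : Type*) [Countable X] (R : Type*) [Fintype R] [Nonempty R] (N : ℕ) :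
    ∃ (f : X → ℝ) (frel : R → X → ℝ),
      (∀ x : X, ∃ q : ℚ, f x = (q : ℝ)) ∧
      (∀ r : R, ∀ x : X, ∃ q : ℚ, frel r x = (q : ℝ)) ∧
      ∀ ε : ℝ, Irrational ε →
        Set.InjOn
          (fun p : X × (R → (X →₀ ℕ)) =>
            (1 + ε) * f p.1 +
              ∑ r : R, (p.2 r).sum fun x n => (n : ℝ) * frel r x)
          {p : X × (R → (X →₀ ℕ)) |
            ∀ r : R, ((p.2 r).sum fun _ n => n) ≤ N} := by
  classical
  obtain ⟨ι, hι⟩ := exists_injective_nat X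
  obtain ⟨e, he⟩ := exists_injective_nat (R × X)
  set w : ℝ := ((N : ℝ) + 2)⁻¹ with hwdef
  set qw : ℚ := ((N : ℚ) + 2)⁻¹ with hqwdef
  have hqw : (qw : ℝ) = w := by push_cast [hqwdef, hwdef]; norm_num
  refine ⟨fun x => (ι x : ℝ), fun r x => w ^ (e (r, x) + 1), ?_, ?_, ?_⟩
  · exact fun x => ⟨(ι x : ℚ), by push_cast; ring⟩
  · exact fun r x => ⟨qw ^ (e (r, x) + 1), by rw [Rat.cast_pow, hqw]⟩
  intro ε hε p hp q hq heq
  simp only [Set.mem_setOf_eq] at hp hq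
  simp only at heq
  -- rationality of the multiset sums
  set Sq : (R → (X →₀ ℕ)) → ℚ :=
    fun M => ∑ r : R, (M r).sum fun x n => (n : ℚ) * qw ^ (e (r, x) + 1) with hSqdef
  have hScast : ∀ M : R → (X →₀ ℕ),
      ((Sq M : ℚ) : ℝ) = ∑ r : R, (M r).sum fun x n => (n : ℝ) * w ^ (e (r, x) + 1) := by
    intro M
    rw [hSqdef]
    push_cast [Finsupp.sum, hqw]
    rfl
  rw [← hScast p.2, ← hScast q.2] at heq
  -- step 1: centers are equal
  have hc : ι p.1 = ι q.1 := by
    by_contra hne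
    have hd : ((ι p.1 : ℚ) - (ι q.1 : ℚ)) ≠ 0 := by
      intro h
      apply hne
      have : (ι p.1 : ℚ) = (ι q.1 : ℚ) := by linarith
      exact_mod_cast this
    have hdR : ((ι p.1 : ℝ)) - ((ι q.1 : ℝ)) ≠ 0 := by
      rw [sub_ne_zero]
      exact fun h => hne (Nat.cast_injective h)
    apply hε
    refine ⟨(Sq q.2 - Sq p.2 + (ι q.1 : ℚ) - (ι p.1 : ℚ)) / ((ι p.1 : ℚ) - (ι q.1 : ℚ)), ?_⟩
    push_cast
    rw [div_eq_iff hdR]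
    ring_nf
    ring_nf at heq
    linarith
  have hc' : p.1 = q.1 := hι hc
  -- step 2: multiset sums are equal
  have hS : (∑ r : R, (p.2 r).sum fun x n => (n : ℝ) * w ^ (e (r, x) + 1))
      = ∑ r : R, (q.2 r).sum fun x n => (n : ℝ) * w ^ (e (r, x) + 1) := by
    rw [← hScast p.2, ← hScast q.2]
    rw [hc] at heq
    linarith [heq]
  -- step 3: recover the multisets
  set Xs : Finset X :=
    Finset.univ.biUnion (fun r : R => (p.2 r).support ∪ (q.2 r).support) with hXsdef
  set P : Finset (R × X) := Finset.univ ×ˢ Xs with hPdef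
  set K : ℕ := (P.sup e) + 1 with hKdef
  have hmem : ∀ pr ∈ P, e pr ∈ Finset.range K := by
    intro pr hpr
    rw [Finset.mem_range, hKdef]
    exact Nat.lt_succ_of_le (Finset.le_sup hpr)
  -- digit functions
  set dig : (R → (X →₀ ℕ)) → ℕ → ℕ :=
    fun M j => ∑ pr ∈ P.filter (fun pr => e pr = j), M pr.1 pr.2 with hdigdef
  have hfilter_sub : ∀ j, ∀ a ∈ P.filter (fun pr => e pr = j),
      ∀ b ∈ P.filter (fun pr => e pr = j), a = b := by
    intro j a ha b hb
    rw [Finset.mem_filter] at ha hb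
    exact he (ha.2.trans hb.2.symm)
  have hvalle : ∀ (M : R → (X →₀ ℕ)), (∀ r, (M r).sum (fun _ n => n) ≤ N) →
      ∀ r x, M r x ≤ N := by
    intro M hM r x
    by_cases hx : x ∈ (M r).support
    · exact le_trans (Finset.single_le_sum (f := fun y => M r y)
        (fun _ _ => Nat.zero_le _) hx) (hM r)
    · simp [Finsupp.notMem_support_iff.mp hx]
  have hdig_le : ∀ (M : R → (X →₀ ℕ)), (∀ r, (M r).sum (fun _ n => n) ≤ N) →
      ∀ j, dig M j ≤ N := by
    intro M hM j
    simp only [hdigdef]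
    rcases Finset.eq_empty_or_nonempty (P.filter (fun pr => e pr = j)) with h | ⟨pr, hpr⟩
    · simp [h]
    · have hsingle : P.filter (fun pr => e pr = j) = {pr} := by
        apply Finset.eq_singleton_iff_unique_mem.mpr
        exact ⟨hpr, fun b hb => hfilter_sub j b hb pr hpr⟩
      rw [hsingle, Finset.sum_singleton]
      exact hvalle M hM pr.1 pr.2
  -- rewrite sum as sum over P
  have hrepr : ∀ M : R → (X →₀ ℕ), (∀ r, (M r).support ⊆ Xs) →
      (∑ r : R, (M r).sum fun x n => (n : ℝ) * w ^ (e (r, x) + 1))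
        = ∑ j ∈ Finset.range K, (dig M j : ℝ) * w ^ (j + 1) := by
    intro M hsub
    have step1 : (∑ r : R, (M r).sum fun x n => (n : ℝ) * w ^ (e (r, x) + 1))
        = ∑ pr ∈ P, (M pr.1 pr.2 : ℝ) * w ^ (e pr + 1) := by
      rw [hPdef, Finset.sum_product]
      refine Finset.sum_congr rfl fun r _ => ?_
      rw [Finsupp.sum]
      show ((M r).support.sum fun x => ((M r x : ℝ)) * w ^ (e (r, x) + 1))
          = ∑ y ∈ Xs, ((M r y : ℝ)) * w ^ (e (r, y) + 1)
      exact Finset.sum_subset (hsub r) (fun x _ hnx => by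
        simp [Finsupp.notMem_support_iff.mp hnx])
    rw [step1, ← Finset.sum_fiberwise_of_maps_to hmem
      (fun pr => (M pr.1 pr.2 : ℝ) * w ^ (e pr + 1))]
    refine Finset.sum_congr rfl fun j _ => ?_
    simp only [hdigdef]
    push_cast
    rw [Finset.sum_mul]
    refine Finset.sum_congr rfl fun pr hpr => ?_
    rw [Finset.mem_filter] at hpr
    rw [hpr.2]
  have hsubp : ∀ r, (p.2 r).support ⊆ Xs := by
    intro r x hx
    rw [hXsdef]
    exact Finset.mem_biUnion.mpr ⟨r, Finset.mem_univ r, Finset.mem_union_left _ hx⟩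
  have hsubq : ∀ r, (q.2 r).support ⊆ Xs := by
    intro r x hx
    rw [hXsdef]
    exact Finset.mem_biUnion.mpr ⟨r, Finset.mem_univ r, Finset.mem_union_right _ hx⟩
  rw [hrepr p.2 hsubp, hrepr q.2 hsubq] at hS
  have hdig_eq := hgin_digits_inj N K (dig p.2) (dig q.2)
    (hdig_le p.2 hp) (hdig_le q.2 hq) hS
  -- conclude
  have hM : p.2 = q.2 := by
    funext r
    ext x
    by_cases hx : x ∈ Xs
    · have hprP : (r, x) ∈ P := by
        rw [hPdef, Finset.mem_product]
        exact ⟨Finset.mem_univ r, hx⟩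
      have hsingle : P.filter (fun pr => e pr = e (r, x)) = {(r, x)} := by
        apply Finset.eq_singleton_iff_unique_mem.mpr
        refine ⟨Finset.mem_filter.mpr ⟨hprP, rfl⟩, fun b hb => ?_⟩
        exact hfilter_sub (e (r, x)) b hb (r, x) (Finset.mem_filter.mpr ⟨hprP, rfl⟩)
      have hdval : ∀ M : R → (X →₀ ℕ), dig M (e (r, x)) = M r x := by
        intro M
        simp only [hdigdef]
        rw [hsingle, Finset.sum_singleton]
      have hlt : e (r, x) < K := Finset.mem_range.mp (hmem _ hprP)
      have := hdig_eq (e (r, x)) hlt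
      rwa [hdval p.2, hdval q.2] at this
    · have h1 : p.2 r x = 0 := Finsupp.notMem_support_iff.mp (fun h => hx (hsubp r h))
      have h2 : q.2 r x = 0 := Finsupp.notMem_support_iff.mp (fun h => hx (hsubq r h))
      rw [h1, h2]
  exact Prod.ext hc' hM
end
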